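/- Let X and Y be locally compact, connected Hausdorff spaces, ρ a quasi-integral on C_c(X) with corresponding compact-finite topological measure μ, η a quasi-integral on C_c(Y) with corresponding finite topological measure ν, and suppose η × ρ is a quasi-integral with corresponding topological measure ν × μ on X × Y. If A ⊆ X and B ⊆ Y are both open, then (ν × μ)(A × B) = μ(A)·ν(B). If in addition μ is finite, the same holds whenever A ⊆ X and B ⊆ Y are both compact. -/

import Mathlib

open scoped ENNReal CompactlySupported
open CompactlySupportedContinuousMap

namespace QLF

variable {X Y : Type*}

/-- Membership in the singly generated subalgebra `B(f)`:
`g ∈ B(f)` iff `g = φ ∘ f` for some continuous `φ` with `φ 0 = 0`. -/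
def InB [TopologicalSpace X] (f g : C_c(X, ℝ)) : Prop :=
  ∃ φ : C(ℝ, ℝ), φ 0 = 0 ∧ ∀ x, g x = φ (f x)

/-- A quasi-integral (quasi-linear functional) on `C_c(X)`. -/
structure IsQuasiIntegral [TopologicalSpace X] (ρ : C_c(X, ℝ) → ℝ) : Prop where
  smul : ∀ (a : ℝ) (f : C_c(X, ℝ)), ρ (a • f) = a * ρ f
  add : ∀ f g h : C_c(X, ℝ), InB f g → InB f h → ρ (g + h) = ρ g + ρ h
  pos : ∀ f : C_c(X, ℝ), (∀ x, 0 ≤ f x) → 0 ≤ ρ f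

/-- The value of the topological measure corresponding to `ρ` on an open set. -/
noncomputable def qiOpen [TopologicalSpace X] (ρ : C_c(X, ℝ) → ℝ) (U : Set X) : ℝ≥0∞ :=
  ⨆ (f : C_c(X, ℝ)) (_ : (∀ x, 0 ≤ f x ∧ f x ≤ 1) ∧ tsupport f ⊆ U), ENNReal.ofReal (ρ f)

open Classical in
/-- The topological measure corresponding to a quasi-integral `ρ`:
on open sets given by `qiOpen`, on other (closed) sets by outer regularity. -/
noncomputable def qiMeas [TopologicalSpace X] (ρ : C_c(X, ℝ) → ℝ) (A : Set X) : ℝ≥0∞ :=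
  if IsOpen A then qiOpen ρ A
  else ⨅ (U : Set X) (_ : IsOpen U ∧ A ⊆ U), qiOpen ρ U

/-- A topological measure on `X` (as a set function on all sets; only its values on
open and closed sets are constrained/meaningful). -/
def IsTopMeasure [TopologicalSpace X] (μ : Set X → ℝ≥0∞) : Prop :=
  (∀ A B : Set X, Disjoint A B → (IsCompact A ∨ IsOpen A) → (IsCompact B ∨ IsOpen B) →
      (IsCompact (A ∪ B) ∨ IsOpen (A ∪ B)) → μ (A ∪ B) = μ A + μ B) ∧
  (∀ U : Set X, IsOpen U → μ U = ⨆ (K : Set X) (_ : IsCompact K ∧ K ⊆ U), μ K) ∧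
  (∀ F : Set X, IsClosed F → μ F = ⨅ (U : Set X) (_ : IsOpen U ∧ F ⊆ U), μ U)

/-- A simple topological measure: assumes only the values 0 and 1 on open and closed sets. -/
def IsSimpleTM [TopologicalSpace X] (μ : Set X → ℝ≥0∞) : Prop :=
  IsTopMeasure μ ∧ ∀ A : Set X, IsOpen A ∨ IsClosed A → μ A = 0 ∨ μ A = 1

/-- A simple quasi-integral: its corresponding topological measure assumes only 0 and 1. -/
def IsSimpleQI [TopologicalSpace X] (ρ : C_c(X, ℝ) → ℝ) : Prop :=
  ∀ A : Set X, IsOpen A ∨ IsClosed A → qiMeas ρ A = 0 ∨ qiMeas ρ A = 1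

/-- An almost simple quasi-integral: its corresponding topological measure is a positive
scalar multiple of a simple topological measure. -/
def IsAlmostSimpleQI [TopologicalSpace X] (ρ : C_c(X, ℝ) → ℝ) : Prop :=
  ∃ (c : ℝ≥0∞) (μ' : Set X → ℝ≥0∞), 0 < c ∧ c ≠ ∞ ∧ IsSimpleTM μ' ∧
    ∀ A : Set X, IsOpen A ∨ IsClosed A → qiMeas ρ A = c * μ' A

/-- The composition `φ ∘ f` as an element of `C_c(X, ℝ)`, for continuous `φ` with `φ 0 = 0`. -/
noncomputable def compCc [TopologicalSpace X] (φ : C(ℝ, ℝ)) (hφ : φ 0 = 0)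
    (f : C_c(X, ℝ)) : C_c(X, ℝ) :=
  ⟨⟨fun x => φ (f x), φ.continuous.comp f.continuous⟩, f.hasCompactSupport'.comp_left hφ⟩

section Products

variable [TopologicalSpace X] [TopologicalSpace Y]

/-- The section `f_y ∈ C_c(X)` of `f ∈ C_c(X × Y)`, `f_y (x) = f (x, y)`. -/
noncomputable def fiberY [T2Space X] (f : C_c(X × Y, ℝ)) (y : Y) : C_c(X, ℝ) :=
  ⟨⟨fun x => f (x, y), f.continuous.comp (continuous_id.prodMk continuous_const)⟩,
    HasCompactSupport.intro (f.hasCompactSupport'.image continuous_fst)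
      (fun x hx => by
        by_contra h
        exact hx ⟨(x, y), subset_tsupport _ h, rfl⟩)⟩

/-- The section `f_x ∈ C_c(Y)` of `f ∈ C_c(X × Y)`, `f_x (y) = f (x, y)`. -/
noncomputable def fiberX [T2Space Y] (f : C_c(X × Y, ℝ)) (x : X) : C_c(Y, ℝ) :=
  ⟨⟨fun y => f (x, y), f.continuous.comp (continuous_const.prodMk continuous_id)⟩,
    HasCompactSupport.intro (f.hasCompactSupport'.image continuous_snd)
      (fun y hy => by
        by_contra h
        exact hy ⟨(x, y), subset_tsupport _ h, rfl⟩)⟩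

/-- `T_ρ(f) (y) = ρ (f_y)` as a bare function on `Y`. -/
noncomputable def Tmap [T2Space X] (ρ : C_c(X, ℝ) → ℝ) (f : C_c(X × Y, ℝ)) : Y → ℝ :=
  fun y => ρ (fiberY f y)

/-- `S_η(f) (x) = η (f_x)` as a bare function on `X`. -/
noncomputable def Smap [T2Space Y] (η : C_c(Y, ℝ) → ℝ) (f : C_c(X × Y, ℝ)) : X → ℝ :=
  fun x => η (fiberX f x)

open Classical in
/-- `T_ρ(f)` as an element of `C_c(Y, ℝ)` (when `ρ` is a quasi-integral, `T_ρ(f)` is indeed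
continuous with compact support, and this definition takes the first branch). -/
noncomputable def TCc [T2Space X] (ρ : C_c(X, ℝ) → ℝ) (f : C_c(X × Y, ℝ)) : C_c(Y, ℝ) :=
  if h : Continuous (Tmap ρ f) ∧ HasCompactSupport (Tmap ρ f)
  then ⟨⟨Tmap ρ f, h.1⟩, h.2⟩ else 0

open Classical in
/-- `S_η(f)` as an element of `C_c(X, ℝ)`. -/
noncomputable def SCc [T2Space Y] (η : C_c(Y, ℝ) → ℝ) (f : C_c(X × Y, ℝ)) : C_c(X, ℝ) :=
  if h : Continuous (Smap η f) ∧ HasCompactSupport (Smap η f)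
  then ⟨⟨Smap η f, h.1⟩, h.2⟩ else 0

/-- The repeated quasi-integral `(η × ρ) (f) = η (T_ρ (f))`. -/
noncomputable def prodQI [T2Space X] (η : C_c(Y, ℝ) → ℝ) (ρ : C_c(X, ℝ) → ℝ) :
    C_c(X × Y, ℝ) → ℝ := fun f => η (TCc ρ f)

/-- The repeated quasi-integral `(ρ × η) (f) = ρ (S_η (f))`. -/
noncomputable def prodQI' [T2Space Y] (ρ : C_c(X, ℝ) → ℝ) (η : C_c(Y, ℝ) → ℝ) :
    C_c(X × Y, ℝ) → ℝ := fun f => ρ (SCc η f)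

/-- The tensor product `(g ⊗ h) (x, y) = g (x) * h (y)` as an element of `C_c(X × Y, ℝ)`. -/
noncomputable def tensor (g : C_c(X, ℝ)) (h : C_c(Y, ℝ)) : C_c(X × Y, ℝ) :=
  ⟨⟨fun p => g p.1 * h p.2,
      (g.continuous.comp continuous_fst).mul (h.continuous.comp continuous_snd)⟩,
    HasCompactSupport.intro' (g.hasCompactSupport'.prod h.hasCompactSupport')
      ((isClosed_tsupport _).prod (isClosed_tsupport _))
      (fun p hp => by
        rcases not_and_or.mp (by simpa [Set.mem_prod] using hp) with h1 | h1
        · simp [image_eq_zero_of_notMem_tsupport h1]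
        · simp [image_eq_zero_of_notMem_tsupport h1])⟩

end Products

/-- A topological measure is subadditive (equivalently, extends to a Borel measure). -/
def IsSubadditiveOnOpens [TopologicalSpace X] (μ : Set X → ℝ≥0∞) : Prop :=
  ∀ U V : Set X, IsOpen U → IsOpen V → μ (U ∪ V) ≤ μ U + μ V

/-- `μ` is a positive scalar multiple of a point mass `δ_{x₀}` (on open and closed sets). -/
def IsPointMassMultiple [TopologicalSpace X] (μ : Set X → ℝ≥0∞) : Prop :=
  ∃ (c : ℝ≥0∞) (x₀ : X), 0 < c ∧ c ≠ ∞ ∧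
    ∀ A : Set X, IsOpen A ∨ IsClosed A →
      μ A = c * A.indicator (fun _ => (1 : ℝ≥0∞)) x₀

section Helpers

lemma qi_zero [TopologicalSpace X] {ρ : C_c(X, ℝ) → ℝ} (hρ : IsQuasiIntegral ρ) : ρ 0 = 0 := by
  have h := hρ.smul 0 0
  simpa using h

lemma qiOpen_mono [TopologicalSpace X] (ρ : C_c(X, ℝ) → ℝ) {U V : Set X} (h : U ⊆ V) :
    qiOpen ρ U ≤ qiOpen ρ V :=
  iSup₂_le fun f hf =>
    le_iSup₂ (f := fun (f : C_c(X, ℝ)) (_ : (∀ x, 0 ≤ f x ∧ f x ≤ 1) ∧ tsupport ⇑f ⊆ V) =>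
      ENNReal.ofReal (ρ f)) f ⟨hf.1, hf.2.trans h⟩

lemma le_qiOpen [TopologicalSpace X] (ρ : C_c(X, ℝ) → ℝ) {U : Set X} {f : C_c(X, ℝ)}
    (h1 : ∀ x, 0 ≤ f x ∧ f x ≤ 1) (h2 : tsupport f ⊆ U) :
    ENNReal.ofReal (ρ f) ≤ qiOpen ρ U :=
  le_iSup₂ (f := fun (f : C_c(X, ℝ)) (_ : (∀ x, 0 ≤ f x ∧ f x ≤ 1) ∧ tsupport ⇑f ⊆ U) =>
    ENNReal.ofReal (ρ f)) f ⟨h1, h2⟩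

lemma qiMeas_open [TopologicalSpace X] (ρ : C_c(X, ℝ) → ℝ) {U : Set X} (hU : IsOpen U) :
    qiMeas ρ U = qiOpen ρ U := if_pos hU

lemma qiMeas_eq_iInf [TopologicalSpace X] (ρ : C_c(X, ℝ) → ℝ) (S : Set X) :
    qiMeas ρ S = ⨅ (U : Set X) (_ : IsOpen U ∧ S ⊆ U), qiOpen ρ U := by
  by_cases h : IsOpen S
  · rw [qiMeas, if_pos h]
    refine le_antisymm (le_iInf₂ fun U hU => qiOpen_mono ρ hU.2) ?_
    exact iInf₂_le S ⟨h, subset_rfl⟩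
  · rw [qiMeas, if_neg h]

lemma qiMeas_le_qiOpen [TopologicalSpace X] (ρ : C_c(X, ℝ) → ℝ) {S U : Set X}
    (hU : IsOpen U) (hSU : S ⊆ U) : qiMeas ρ S ≤ qiOpen ρ U := by
  rw [qiMeas_eq_iInf]; exact iInf₂_le U ⟨hU, hSU⟩

lemma qi_le_of_bound [TopologicalSpace X] {η : C_c(X, ℝ) → ℝ} (hη : IsQuasiIntegral η)
    {B : Set X} {k : C_c(X, ℝ)} {c : ℝ} (hc : 0 < c)
    (h0 : ∀ x, 0 ≤ k x) (hb : ∀ x, k x ≤ c) (hs : tsupport k ⊆ B)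
    (hfin : qiOpen η B ≠ ∞) :
    η k ≤ c * (qiOpen η B).toReal := by
  set h : C_c(X, ℝ) := c⁻¹ • k with hh
  have happ : ∀ x, h x = c⁻¹ * k x := fun x => rfl
  have hk : k = c • h := by
    ext x
    show k x = c * h x
    rw [happ, ← mul_assoc, mul_inv_cancel₀ hc.ne', one_mul]
  have h01 : ∀ x, 0 ≤ h x ∧ h x ≤ 1 := fun x => by
    rw [happ]
    constructor
    · exact mul_nonneg (inv_nonneg.2 hc.le) (h0 x)
    · rw [inv_mul_le_iff₀ hc, mul_one]; exact hb x
  have hsh : tsupport ⇑h ⊆ B := by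
    refine subset_trans (closure_mono fun x hx => ?_) hs
    simp only [Function.mem_support, happ] at hx ⊢
    intro h0'; exact hx (by rw [h0', mul_zero])
  have hle : η h ≤ (qiOpen η B).toReal :=
    (ENNReal.ofReal_le_iff_le_toReal hfin).1 (le_qiOpen η h01 hsh)
  calc η k = c * η h := by rw [hk, hη.smul]
  _ ≤ c * (qiOpen η B).toReal := mul_le_mul_of_nonneg_left hle hc.le

end Helpers
section Main

variable [TopologicalSpace X] [TopologicalSpace Y] [T2Space X]

lemma prodQI_tensor {ρ : C_c(X, ℝ) → ℝ} {η : C_c(Y, ℝ) → ℝ}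
    (hρ : IsQuasiIntegral ρ) (hη : IsQuasiIntegral η)
    (f : C_c(X, ℝ)) (g : C_c(Y, ℝ)) :
    prodQI η ρ (tensor f g) = ρ f * η g := by
  have hfib : ∀ y, fiberY (tensor f g) y = g y • f := fun y => by
    ext x
    show f x * g y = g y * f x
    ring
  have hT : Tmap ρ (tensor f g) = ⇑(ρ f • g) := by
    funext y
    show ρ (fiberY (tensor f g) y) = ρ f * g y
    rw [hfib y, hρ.smul, mul_comm]
  have hc : Continuous (Tmap ρ (tensor f g)) ∧ HasCompactSupport (Tmap ρ (tensor f g)) := by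
    rw [hT]; exact ⟨(ρ f • g).continuous, (ρ f • g).hasCompactSupport'⟩
  have hTCc : TCc ρ (tensor f g) = ρ f • g := by
    rw [TCc, dif_pos hc]
    ext y
    exact congrFun hT y
  show η (TCc ρ (tensor f g)) = ρ f * η g
  rw [hTCc, hη.smul]

lemma tensor_supp {f : C_c(X, ℝ)} {g : C_c(Y, ℝ)} {A : Set X} {B : Set Y}
    (hf : tsupport ⇑f ⊆ A) (hg : tsupport ⇑g ⊆ B) :
    tsupport ⇑(tensor f g) ⊆ A ×ˢ B := by
  have h1 : Function.support ⇑(tensor f g) ⊆ Function.support ⇑f ×ˢ Function.support ⇑g := by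
    intro p hp
    simp only [Function.mem_support] at hp
    constructor
    · intro h0; exact hp (by show f p.1 * g p.2 = 0; rw [h0, zero_mul])
    · intro h0; exact hp (by show f p.1 * g p.2 = 0; rw [h0, mul_zero])
  calc tsupport ⇑(tensor f g) ⊆ closure (Function.support ⇑f ×ˢ Function.support ⇑g) :=
        closure_mono h1
  _ = tsupport ⇑f ×ˢ tsupport ⇑g := closure_prod_eq
  _ ⊆ A ×ˢ B := Set.prod_mono hf hg

/-- The open-set case: on (arbitrary) products `A ×ˢ B`, `qiOpen` of the product
quasi-integral is the product of the `qiOpen`s. -/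
lemma qiOpen_prod {ρ : C_c(X, ℝ) → ℝ} {η : C_c(Y, ℝ) → ℝ}
    (hρ : IsQuasiIntegral ρ) (hη : IsQuasiIntegral η)
    (hνfin : qiOpen η (Set.univ : Set Y) ≠ ∞) (A : Set X) (B : Set Y) :
    qiOpen (prodQI η ρ) (A ×ˢ B) = qiOpen ρ A * qiOpen η B := by
  have hn : qiOpen η B ≠ ∞ :=
    fun h => hνfin (top_le_iff.1 (h ▸ qiOpen_mono η (Set.subset_univ B)))
  refine le_antisymm ?hle ?hge
  case hge =>
    rw [qiOpen, qiOpen, ENNReal.iSup_mul]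
    refine iSup_le fun f => ?_
    rw [ENNReal.iSup_mul]
    refine iSup_le fun hf => ?_
    rw [ENNReal.mul_iSup]
    refine iSup_le fun g => ?_
    rw [ENNReal.mul_iSup]
    refine iSup_le fun hg => ?_
    have hρf : 0 ≤ ρ f := hρ.pos f fun x => (hf.1 x).1
    have heq : ENNReal.ofReal (ρ f) * ENNReal.ofReal (η g)
        = ENNReal.ofReal (prodQI η ρ (tensor f g)) := by
      rw [prodQI_tensor hρ hη, ENNReal.ofReal_mul hρf]
    rw [heq]
    refine le_qiOpen _ (fun p => ?_) (tensor_supp hf.2 hg.2)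
    constructor
    · exact mul_nonneg (hf.1 p.1).1 (hg.1 p.2).1
    · exact mul_le_one₀ (hf.1 p.1).2 (hg.1 p.2).1 (hg.1 p.2).2
  case hle =>
    refine iSup₂_le fun F hF => ?_
    by_cases han : qiOpen ρ A * qiOpen η B = ∞
    · rw [han]; exact le_top
    show ENNReal.ofReal (η (TCc ρ F)) ≤ _
    by_cases hc : Continuous (Tmap ρ F) ∧ HasCompactSupport (Tmap ρ F)
    case neg =>
      rw [TCc, dif_neg hc, qi_zero hη]
      simp
    case pos =>
    set g : C_c(Y, ℝ) := TCc ρ F with hgdef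
    have hgval : ∀ y, g y = ρ (fiberY F y) := fun y => by
      rw [hgdef, TCc, dif_pos hc]; rfl
    have hg0 : ∀ y, 0 ≤ g y := fun y => by
      rw [hgval]; exact hρ.pos _ fun x => (hF.1 (x, y)).1
    have hfibA : ∀ y, tsupport ⇑(fiberY F y) ⊆ A := fun y => by
      have hcl : IsClosed {x | (x, y) ∈ tsupport ⇑F} :=
        (isClosed_tsupport ⇑F).preimage (continuous_id.prodMk continuous_const)
      have hsub : Function.support ⇑(fiberY F y) ⊆ {x | (x, y) ∈ tsupport ⇑F} :=
        fun x hx => subset_tsupport ⇑F hx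
      exact (closure_minimal hsub hcl).trans fun x hx => (hF.2 hx).1
    have hgA : ∀ y, ENNReal.ofReal (g y) ≤ qiOpen ρ A := fun y => by
      rw [hgval]
      exact le_qiOpen ρ (fun x => hF.1 (x, y)) (hfibA y)
    have hgB : ∀ y, y ∉ B → g y = 0 := fun y hy => by
      have hfz : fiberY F y = 0 := by
        ext x
        show F (x, y) = 0
        refine image_eq_zero_of_notMem_tsupport fun hmem => hy (hF.2 hmem).2
      rw [hgval, hfz, qi_zero hρ]
    -- main estimate
    have hmain : ∀ ε : ℝ, 0 < ε →
        η g ≤ (qiOpen ρ A * qiOpen η B).toReal + ε * (qiOpen η Set.univ).toReal := by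
      intro ε hε
      set φ₁ : C(ℝ, ℝ) := ⟨fun t => max (t - ε) 0,
        (continuous_id.sub continuous_const).max continuous_const⟩ with hφ₁def
      set φ₂ : C(ℝ, ℝ) := ⟨fun t => min t ε, continuous_id.min continuous_const⟩ with hφ₂def
      have hφ₁0 : φ₁ 0 = 0 := by
        show max (0 - ε) 0 = 0
        rw [max_eq_right (by linarith)]
      have hφ₂0 : φ₂ 0 = 0 := by
        show min 0 ε = 0
        rw [min_eq_left hε.le]
      set g₁ := compCc φ₁ hφ₁0 g with hg₁def
      set g₂ := compCc φ₂ hφ₂0 g with hg₂def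
      have hg₁app : ∀ y, g₁ y = max (g y - ε) 0 := fun y => rfl
      have hg₂app : ∀ y, g₂ y = min (g y) ε := fun y => rfl
      have hsum : g₁ + g₂ = g := by
        ext y
        show g₁ y + g₂ y = g y
        rw [hg₁app, hg₂app]
        rcases le_total (g y) ε with h | h
        · rw [min_eq_left h, max_eq_right (by linarith), zero_add]
        · rw [min_eq_right h, max_eq_left (by linarith)]; ring
      have hadd : η g = η g₁ + η g₂ := by
        rw [← hsum]
        exact hη.add g g₁ g₂ ⟨φ₁, hφ₁0, fun y => rfl⟩ ⟨φ₂, hφ₂0, fun y => rfl⟩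
      -- bound on g₂
      have hbg₂ : η g₂ ≤ ε * (qiOpen η Set.univ).toReal := by
        refine qi_le_of_bound hη hε (fun y => ?_) (fun y => ?_) (Set.subset_univ _) hνfin
        · rw [hg₂app]; exact le_min (hg0 y) hε.le
        · rw [hg₂app]; exact min_le_right _ _
      -- bound on g₁
      have hg₁0 : ∀ y, 0 ≤ g₁ y := fun y => by rw [hg₁app]; exact le_max_right _ _
      have hg₁supp : tsupport ⇑g₁ ⊆ B := by
        have hcls : IsClosed {y | ε ≤ g y} := isClosed_le continuous_const g.continuous
        have hsub : Function.support ⇑g₁ ⊆ {y | ε ≤ g y} := by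
          intro y hy
          simp only [Function.mem_support, hg₁app] at hy
          simp only [Set.mem_setOf_eq]
          by_contra h
          push_neg at h
          exact hy (max_eq_right (by linarith))
        refine (closure_minimal hsub hcls).trans fun y hy => ?_
        have hyε : ε ≤ g y := hy
        by_contra hyB
        rw [hgB y hyB] at hyε
        linarith
      have hbg₁ : η g₁ ≤ (qiOpen ρ A * qiOpen η B).toReal := by
        by_cases ha : qiOpen ρ A = ∞
        · have hn0 : qiOpen η B = 0 := by
            by_contra h
            exact han (by rw [ha, ENNReal.top_mul h])
          obtain ⟨C, hC⟩ :=
            g₁.continuous.bounded_above_of_compact_support g₁.hasCompactSupport'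
          have hb := qi_le_of_bound hη (c := max C 1)
            (lt_of_lt_of_le one_pos (le_max_right _ _)) hg₁0
            (fun y => ((le_abs_self _).trans (hC y)).trans (le_max_left _ _)) hg₁supp hn
          rw [hn0] at hb
          simp only [ENNReal.toReal_zero, mul_zero] at hb
          exact hb.trans ENNReal.toReal_nonneg
        · have hgbound : ∀ y, g y ≤ (qiOpen ρ A).toReal := fun y =>
            (ENNReal.ofReal_le_iff_le_toReal ha).1 (hgA y)
          by_cases hat : 0 < (qiOpen ρ A).toReal
          · have hb := qi_le_of_bound hη hat hg₁0 (fun y => ?_) hg₁supp hn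
            · rw [← ENNReal.toReal_mul] at hb; exact hb
            · rw [hg₁app]
              exact max_le (by linarith [hgbound y]) ENNReal.toReal_nonneg
          · push_neg at hat
            have hg₁z : g₁ = 0 := by
              ext y
              show g₁ y = 0
              rw [hg₁app, max_eq_right]
              have := hgbound y
              have h0 := hg0 y
              have := ENNReal.toReal_nonneg (a := qiOpen ρ A)
              linarith
            rw [hg₁z, qi_zero hη]
            exact ENNReal.toReal_nonneg
      rw [hadd]
      exact add_le_add hbg₁ hbg₂
    -- pass to the limit in ε
    have hfinal : η g ≤ (qiOpen ρ A * qiOpen η B).toReal := by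
      refine le_of_forall_pos_le_add fun δ hδ => ?_
      set t := (qiOpen η Set.univ).toReal with ht
      have ht0 : 0 ≤ t := ENNReal.toReal_nonneg
      have hεpos : 0 < δ / (t + 1) := div_pos hδ (by linarith)
      refine (hmain _ hεpos).trans ?_
      have : δ / (t + 1) * t ≤ δ := by
        rw [div_mul_eq_mul_div, div_le_iff₀ (by linarith)]
        nlinarith
      linarith
    calc ENNReal.ofReal (η g) ≤ ENNReal.ofReal ((qiOpen ρ A * qiOpen η B).toReal) :=
          ENNReal.ofReal_le_ofReal hfinal
    _ = qiOpen ρ A * qiOpen η B := ENNReal.ofReal_toReal han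

end Main

end QLF

namespace QLF
theorem statement16 {X Y : Type*}
    [TopologicalSpace X] [LocallyCompactSpace X] [T2Space X] [ConnectedSpace X]
    [TopologicalSpace Y] [LocallyCompactSpace Y] [T2Space Y] [ConnectedSpace Y]
    (ρ : C_c(X, ℝ) → ℝ) (η : C_c(Y, ℝ) → ℝ)
    (hρ : IsQuasiIntegral ρ) (hη : IsQuasiIntegral η)
    (hμcf : ∀ K : Set X, IsCompact K → qiMeas ρ K ≠ ∞)
    (hνfin : qiMeas η (Set.univ : Set Y) ≠ ∞)
    (hqi : IsQuasiIntegral (prodQI η ρ)) :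
    (∀ (A : Set X) (B : Set Y), IsOpen A → IsOpen B →
      qiMeas (prodQI η ρ) (A ×ˢ B) = qiMeas ρ A * qiMeas η B) ∧
    (qiMeas ρ (Set.univ : Set X) ≠ ∞ →
      ∀ (A : Set X) (B : Set Y), IsCompact A → IsCompact B →
        qiMeas (prodQI η ρ) (A ×ˢ B) = qiMeas ρ A * qiMeas η B) := by
  have hν' : qiOpen η (Set.univ : Set Y) ≠ ∞ := by
    rw [← qiMeas_open η isOpen_univ]; exact hνfin
  refine ⟨?_, ?_⟩
  · intro A B hA hB
    rw [qiMeas_open _ (hA.prod hB), qiMeas_open _ hA, qiMeas_open _ hB]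
    exact qiOpen_prod hρ hη hν' A B
  intro hμfin A B hA hB
  have hm : qiMeas ρ A ≠ ∞ := hμcf A hA
  have hn : qiMeas η B ≠ ∞ :=
    ne_top_of_le_ne_top hν' (qiMeas_le_qiOpen η isOpen_univ (Set.subset_univ B))
  refine le_antisymm ?hle ?hge
  case hge =>
    rw [qiMeas_eq_iInf (prodQI η ρ)]
    refine le_iInf₂ fun W hW => ?_
    obtain ⟨U, V, hU, hV, hAU, hBV, hUVW⟩ := generalized_tube_lemma hA hB hW.1 hW.2
    calc qiMeas ρ A * qiMeas η B ≤ qiOpen ρ U * qiOpen η V :=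
        mul_le_mul' (qiMeas_le_qiOpen ρ hU hAU) (qiMeas_le_qiOpen η hV hBV)
    _ = qiOpen (prodQI η ρ) (U ×ˢ V) := (qiOpen_prod hρ hη hν' U V).symm
    _ ≤ qiOpen (prodQI η ρ) W := qiOpen_mono _ hUVW
  case hle =>
    refine ENNReal.le_of_forall_pos_le_add fun ε hε _ => ?_
    have hS0 : qiMeas ρ A + qiMeas η B + 1 ≠ 0 := by simp
    have hSfin : qiMeas ρ A + qiMeas η B + 1 ≠ ∞ := by
      simp [ENNReal.add_eq_top, hm, hn]
    set S := qiMeas ρ A + qiMeas η B + 1 with hSdef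
    set δ := min 1 ((ε : ℝ≥0∞) / S) with hδdef
    have hδ0 : δ ≠ 0 := by
      refine (lt_min one_pos (ENNReal.div_pos ?_ hSfin)).ne'
      exact_mod_cast hε.ne'
    have hδ1 : δ ≤ 1 := min_le_left _ _
    have hδε : δ * S ≤ ε :=
      (mul_le_mul_left (min_le_right _ _) S).trans
        (le_of_eq (ENNReal.div_mul_cancel hS0 hSfin))
    have hmlt : qiMeas ρ A < qiMeas ρ A + δ :=
      ENNReal.lt_add_right hm hδ0
    have hnlt : qiMeas η B < qiMeas η B + δ :=
      ENNReal.lt_add_right hn hδ0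
    obtain ⟨U, hU, hUlt⟩ : ∃ U, (IsOpen U ∧ A ⊆ U) ∧ qiOpen ρ U < qiMeas ρ A + δ := by
      nth_rewrite 1 [qiMeas_eq_iInf ρ A] at hmlt
      simpa only [iInf_lt_iff, exists_prop] using hmlt
    obtain ⟨V, hV, hVlt⟩ : ∃ V, (IsOpen V ∧ B ⊆ V) ∧ qiOpen η V < qiMeas η B + δ := by
      nth_rewrite 1 [qiMeas_eq_iInf η B] at hnlt
      simpa only [iInf_lt_iff, exists_prop] using hnlt
    calc qiMeas (prodQI η ρ) (A ×ˢ B)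
        ≤ qiOpen (prodQI η ρ) (U ×ˢ V) :=
          qiMeas_le_qiOpen _ (hU.1.prod hV.1) (Set.prod_mono hU.2 hV.2)
    _ = qiOpen ρ U * qiOpen η V := qiOpen_prod hρ hη hν' U V
    _ ≤ (qiMeas ρ A + δ) * (qiMeas η B + δ) := mul_le_mul' hUlt.le hVlt.le
    _ = qiMeas ρ A * qiMeas η B + δ * (qiMeas ρ A + qiMeas η B + δ) := by ring
    _ ≤ qiMeas ρ A * qiMeas η B + δ * S := by
        refine add_le_add_right (mul_le_mul_right ?_ δ) _
        rw [hSdef]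
        exact add_le_add_right hδ1 _
    _ ≤ qiMeas ρ A * qiMeas η B + ε := add_le_add_right hδε _

end QLF
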